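/- Let A and B be max-plus automata over the same finite alphabet Σ with A deterministic and f_B(v) ∈ ℕ for all words v. If some word w with f_A(w) ≠ −∞ admits a factorisation tree of height at most 3|S̄_{A,B}| containing a fault, then I_{A,B} contains a tractable witness of non-domination. -/

import Mathlib

open scoped Classical

/-! ### Max-plus automata -/

/-- A max-plus automaton over alphabet `Sigma` with states `Q`:
a transition matrix for each letter, an initial row vector and a final column vector,
all with entries in `ℕmax = ℕ ∪ {-∞}`, represented as `WithBot ℕ`. -/
structure MPA (Sigma : Type) (Q : Type) where
  M : Sigma → Q → Q → WithBot ℕ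
  I : Q → WithBot ℕ
  F : Q → WithBot ℕ

namespace MPA

variable {Sigma Q : Type}

/-- The matrix of a word, i.e. the product `M(w₁) ⊗ ⋯ ⊗ M(w_k)` over the
max-plus semiring. -/
def mword [Fintype Q] [DecidableEq Q] (A : MPA Sigma Q) : List Sigma → Q → Q → WithBot ℕ
  | [] => fun p q => if p = q then ((0 : ℕ) : WithBot ℕ) else ⊥
  | a :: w => fun p q => Finset.univ.sup fun r => A.M a p r + A.mword w r q

/-- The weighting function computed by a max-plus automaton:
`f_A(w) = I ⊗ M(w) ⊗ F`. -/
def func [Fintype Q] [DecidableEq Q] (A : MPA Sigma Q) (w : List Sigma) : WithBot ℕ :=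
  Finset.univ.sup fun p => Finset.univ.sup fun q => A.I p + A.mword w p q + A.F q

/-- `A` is deterministic: at most one non-`-∞` entry in `I`,
and at most one non-`-∞` entry in each row of each `M(a)`. -/
def Deterministic (A : MPA Sigma Q) : Prop :=
  (∀ p q, A.I p ≠ ⊥ → A.I q ≠ ⊥ → p = q) ∧
    ∀ a p q r, A.M a p q ≠ ⊥ → A.M a p r ≠ ⊥ → q = r

end MPA

/-- `A` is big-O of `B`: there is `c ≥ 1` with `f_A(w) ≤ c·f_B(w) + c` for all `w`. -/
def BigO {Sigma Q1 Q2 : Type} [Fintype Q1] [DecidableEq Q1] [Fintype Q2] [DecidableEq Q2]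
    (A : MPA Sigma Q1) (B : MPA Sigma Q2) : Prop :=
  ∃ c : ℕ, 1 ≤ c ∧ ∀ w : List Sigma, A.func w ≤ c • B.func w + (c : WithBot ℕ)

/-! ### The semiring Ω = {-∞, 0, 1, ∞} -/

/-- The four-element semiring `Ω = ({-∞,0,1,∞}, max, +)`. -/
inductive OSR : Type
  | bot | zero | one | inf
  deriving DecidableEq

namespace OSR

def rank : OSR → ℕ
  | bot => 0 | zero => 1 | one => 2 | inf => 3

instance : LE OSR := ⟨fun a b => a.rank ≤ b.rank⟩
instance : LT OSR := ⟨fun a b => a.rank < b.rank⟩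

/-- The max operation of `Ω`, given by the order `-∞ < 0 < 1 < ∞`. -/
def sup (a b : OSR) : OSR := if a.rank ≤ b.rank then b else a

/-- The sum operation of `Ω`. -/
def add : OSR → OSR → OSR
  | bot, _ => bot
  | _, bot => bot
  | zero, x => x
  | x, zero => x
  | one, one => one
  | one, inf => inf
  | inf, one => inf
  | inf, inf => inf

/-- Stabilisation on `Ω`. -/
def sharp : OSR → OSR
  | bot => bot | zero => zero | one => inf | inf => inf

/-- Projection into `Ω̄ = {-∞,0,1}`. -/
def bar : OSR → OSR
  | bot => bot | zero => zero | one => one | inf => one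

end OSR

/-- Max of a finite family in `Ω`. -/
def osum {n : ℕ} (f : Fin n → OSR) : OSR :=
  (List.finRange n).foldr (fun j acc => OSR.sup (f j) acc) OSR.bot

/-- Product of matrices over `Ω`. -/
def omul {n : ℕ} (M N : Fin n → Fin n → OSR) : Fin n → Fin n → OSR :=
  fun i k => osum fun j => OSR.add (M i j) (N j k)

/-- Entrywise projection of a matrix into `Ω̄`. -/
def obar {n : ℕ} (M : Fin n → Fin n → OSR) : Fin n → Fin n → OSR :=
  fun i j => (M i j).bar

/-- Projection of `ℕmax` into `Ω̄ ⊆ Ω`: `-∞ ↦ -∞`, `0 ↦ 0`, positive ↦ `1`. -/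
def barW (x : WithBot ℕ) : OSR :=
  WithBot.recBotCoe OSR.bot (fun n => if n = 0 then OSR.zero else OSR.one) x

/-- Projection of `ℕ` into `Ω̄`. -/
def barNat (n : ℕ) : OSR := if n = 0 then OSR.zero else OSR.one

/-! ### The semigroups `I_{Q,i}` and their operations -/

/-- A (non-`⊥`) element `(p, x, q, M)` of the semigroup `I_{Q,n}`. -/
structure Elem (QA : Type) (n : ℕ) where
  p : QA
  x : OSR
  q : QA
  M : Fin n → Fin n → OSR

/-- Product of two elements (assuming endpoint compatibility). -/
def eprod {QA : Type} {n : ℕ} (e f : Elem QA n) : Elem QA n :=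
  ⟨e.p, e.x.add f.x, f.q, omul e.M f.M⟩

/-- The product in `I_{Q,n}` with `⊥` (`none` is `⊥`). -/
def omulO {QA : Type} {n : ℕ} [DecidableEq QA] :
    Option (Elem QA n) → Option (Elem QA n) → Option (Elem QA n)
  | some e, some f => if e.q = f.p then some (eprod e f) else none
  | _, _ => none

/-- `(p,x,q,M)` is path-idempotent: `p = q` and `bar(M)` is idempotent. -/
def pathIdem {QA : Type} {n : ℕ} (e : Elem QA n) : Prop :=
  e.p = e.q ∧ omul (obar e.M) (obar e.M) = obar e.M

/-- `M` with all diagonal entries replaced by their stabilisation. -/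
def mdiagSharp {n : ℕ} (M : Fin n → Fin n → OSR) : Fin n → Fin n → OSR :=
  fun i j => if i = j then (M i j).sharp else M i j

/-- Stabilisation of a (path-idempotent) matrix: `M^# = M ⊗ M' ⊗ M`. -/
def mstab {n : ℕ} (M : Fin n → Fin n → OSR) : Fin n → Fin n → OSR :=
  omul (omul M (mdiagSharp M)) M

/-- Stabilisation of a (path-idempotent) element. -/
def estab {QA : Type} {n : ℕ} (e : Elem QA n) : Elem QA n :=
  ⟨e.p, e.x.sharp, e.p, mstab e.M⟩

/-- `⟨N⟩`: all off-diagonal entries replaced by their bar. -/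
def mangle {n : ℕ} (M : Fin n → Fin n → OSR) : Fin n → Fin n → OSR :=
  fun i j => if i = j then M i j else (M i j).bar

/-- Flattening of a (path-idempotent) matrix: `M^♭ = bar(M) ⊗ ⟨M³⟩ ⊗ bar(M)`. -/
def mflat {n : ℕ} (M : Fin n → Fin n → OSR) : Fin n → Fin n → OSR :=
  omul (obar M) (omul (mangle (omul M (omul M M))) (obar M))

/-- Flattening of a (path-idempotent) element. -/
def eflat {QA : Type} {n : ℕ} (e : Elem QA n) : Elem QA n :=
  ⟨e.p, e.x, e.p, mflat e.M⟩

/-- Componentwise projection of an element to `Ω̄`. -/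
def ebar {QA : Type} {n : ℕ} (e : Elem QA n) : Elem QA n :=
  ⟨e.p, e.x.bar, e.q, obar e.M⟩

/-! ### Semigroup of paths and of asymptotic behaviours -/

/-- Generators: `(p, bar x, q, bar (M_B(a)))` for each transition `p →^{a:x} q` of `A`
with `x ≠ -∞`. -/
def IsGen {Sigma QA : Type} {nB : ℕ} (A : MPA Sigma QA) (B : MPA Sigma (Fin nB))
    (e : Elem QA nB) : Prop :=
  ∃ (a : Sigma) (p q : QA) (x : ℕ), A.M a p q = ((x : ℕ) : WithBot ℕ) ∧
    e = ⟨p, barNat x, q, fun i j => barW (B.M a i j)⟩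

/-- The semigroup of paths `S̄_{A,B}` (as a subset of `Ī_{Q_A,|Q_B|}`, including `⊥`):
generated by the generators under the product. -/
inductive InPathsO {Sigma QA : Type} {nB : ℕ} [DecidableEq QA]
    (A : MPA Sigma QA) (B : MPA Sigma (Fin nB)) : Option (Elem QA nB) → Prop
  | gen : ∀ e, IsGen A B e → InPathsO A B (some e)
  | mul : ∀ x y, InPathsO A B x → InPathsO A B y → InPathsO A B (omulO x y)

/-- The semigroup of asymptotic behaviours `I_{A,B}`: generated by the generators and
closed under product, stabilisation and flattening. -/
inductive InAsympO {Sigma QA : Type} {nB : ℕ} [DecidableEq QA]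
    (A : MPA Sigma QA) (B : MPA Sigma (Fin nB)) : Option (Elem QA nB) → Prop
  | gen : ∀ e, IsGen A B e → InAsympO A B (some e)
  | mul : ∀ x y, InAsympO A B x → InAsympO A B y → InAsympO A B (omulO x y)
  | stab : ∀ e, InAsympO A B (some e) → pathIdem e → InAsympO A B (some (estab e))
  | flat : ∀ e, InAsympO A B (some e) → pathIdem e → InAsympO A B (some (eflat e))

/-- The cardinality `|S̄_{A,B}|` of the semigroup of paths. -/
noncomputable def sizeS {Sigma QA : Type} {nB : ℕ} [DecidableEq QA]
    (A : MPA Sigma QA) (B : MPA Sigma (Fin nB)) : ℕ :=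
  Set.ncard {x : Option (Elem QA nB) | InPathsO A B x}

/-- `(p,x,q,M)` is a witness of non-domination: `p` initial in `A`, `q` final in `A`,
`x = ∞` and `bar(I_B) ⊗ M ⊗ bar(F_B) < ∞`. -/
def IsWitness {Sigma QA : Type} {nB : ℕ} (A : MPA Sigma QA) (B : MPA Sigma (Fin nB))
    (e : Elem QA nB) : Prop :=
  A.I e.p ≠ ⊥ ∧ A.F e.q ≠ ⊥ ∧ e.x = OSR.inf ∧
    osum (fun i => osum fun j =>
      OSR.add (barW (B.I i)) (OSR.add (e.M i j) (barW (B.F j)))) ≠ OSR.inf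

/-! ### Tractable witnesses -/

/-- Membership of an extended element (`none` is the adjoined identity `𝟙`) in `S̄_{A,B}`. -/
def InPathsOpt {Sigma QA : Type} {nB : ℕ} [DecidableEq QA]
    (A : MPA Sigma QA) (B : MPA Sigma (Fin nB)) : Option (Elem QA nB) → Prop
  | none => True
  | some e => InPathsO A B (some e)

/-- `g ⊗ e ⊗ g'` where `g, g'` may be the adjoined identity `𝟙` (i.e. `none`). -/
def extWrap {QA : Type} {n : ℕ} (g : Option (Elem QA n)) (e : Elem QA n)
    (g' : Option (Elem QA n)) : Elem QA n :=
  match g, g' with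
  | none, none => e
  | some a, none => eprod a e
  | none, some b => eprod e b
  | some a, some b => eprod a (eprod e b)

/-- `TractCore A B k e`: `e` has the form
`(g_1 (⋯ (g_{k-1} (g_k)^# g'_{k-1})^♭ ⋯)^♭ g'_1)^♭` with `k` flattenings, built from
elements of `S̄_{A,B} ∪ {𝟙}`. -/
inductive TractCore {Sigma QA : Type} {nB : ℕ} [DecidableEq QA]
    (A : MPA Sigma QA) (B : MPA Sigma (Fin nB)) : ℕ → Elem QA nB → Prop
  | base : ∀ e, InPathsO A B (some e) → pathIdem e → TractCore A B 0 (estab e)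
  | step : ∀ k e g g', TractCore A B k e →
      InPathsOpt A B g → InPathsOpt A B g' →
      (∀ a, g = some a → a.q = e.p) → (∀ b, g' = some b → e.q = b.p) →
      pathIdem (extWrap g e g') →
      TractCore A B (k + 1) (eflat (extWrap g e g'))

/-- A tractable witness of non-domination. -/
def IsTractableWitness {Sigma QA : Type} {nB : ℕ} [DecidableEq QA]
    (A : MPA Sigma QA) (B : MPA Sigma (Fin nB)) (wit : Elem QA nB) : Prop :=
  IsWitness A B wit ∧
    ∃ (m : ℕ) (e : Elem QA nB) (g g' : Option (Elem QA nB)),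
      m + 1 ≤ 3 * sizeS A B ∧
      TractCore A B m e ∧ InPathsOpt A B g ∧ InPathsOpt A B g' ∧
      (∀ a, g = some a → a.q = e.p) ∧ (∀ b, g' = some b → e.q = b.p) ∧
      wit = extWrap g e g'

/-! ### Factorisation trees -/

/-- Finite ordered trees labelled by elements of `Ī_{Q_A,|Q_B|}`. -/
inductive FT (QA : Type) (n : ℕ) : Type
  | leaf : Elem QA n → FT QA n
  | node : Elem QA n → List (FT QA n) → FT QA n

namespace FT

variable {QA : Type} {n : ℕ}

/-- The label of the root of a tree. -/
def label : FT QA n → Elem QA n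
  | leaf e => e
  | node e _ => e

mutual
  /-- The list of leaf labels of a tree, in order. -/
  def leaves : FT QA n → List (Elem QA n)
    | .leaf e => [e]
    | .node _ cs => leavesList cs
  def leavesList : List (FT QA n) → List (Elem QA n)
    | [] => []
    | t :: ts => leaves t ++ leavesList ts
end

mutual
  /-- Height of a tree: leaves have height `0`. -/
  def height : FT QA n → ℕ
    | .leaf _ => 0
    | .node _ cs => heightList cs + 1
  def heightList : List (FT QA n) → ℕ
    | [] => 0
    | t :: ts => max (height t) (heightList ts)
end

/-- The `i`-th child. -/
def childAt : FT QA n → ℕ → Option (FT QA n)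
  | leaf _, _ => none
  | node _ cs, i => cs[i]?

/-- The subtree at a path (a list of child indices from the root). -/
def subtreeAt : FT QA n → List ℕ → Option (FT QA n)
  | t, [] => some t
  | t, i :: rest => (t.childAt i).bind fun c => subtreeAt c rest

/-- Well-formed factorisation trees: internal nodes have ≥ 2 children, are labelled by the
product of the children's labels (with compatible endpoints), and nodes with ≥ 3 children
are idempotent nodes: all children and the node itself carry one same idempotent label. -/
inductive WF : FT QA n → Prop
  | leaf : ∀ e, WF (FT.leaf e)
  | node : ∀ (lbl : Elem QA n) (cs : List (FT QA n)),
      2 ≤ cs.length →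
      (∀ c ∈ cs, WF c) →
      List.Chain' (fun a b => a.q = b.p) (cs.map FT.label) →
      (∀ h t, cs.map FT.label = h :: t → lbl = t.foldl eprod h) →
      (3 ≤ cs.length → lbl.p = lbl.q ∧ eprod lbl lbl = lbl ∧ ∀ c ∈ cs, FT.label c = lbl) →
      WF (FT.node lbl cs)

end FT

/-- One top-down step of the computation of contributors: from the contributor set `C` of a
node with children `cs`, the contributor set of the `i`-th child. -/
def contribStep {QA : Type} {n : ℕ} (cs : List (FT QA n)) (C : Set (Fin n × Fin n)) (i : ℕ) :
    Set (Fin n × Fin n) :=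
  match cs with
  | [c1, c2] =>
      let M := (FT.label c1).M
      let P := (FT.label c2).M
      if i = 0 then
        {il | ∃ j, (il.1, j) ∈ C ∧ P il.2 j ≠ OSR.bot ∧ M il.1 il.2 ≠ OSR.bot}
      else
        {lj | ∃ a, (a, lj.2) ∈ C ∧ M a lj.1 ≠ OSR.bot ∧ P lj.1 lj.2 ≠ OSR.bot}
  | c :: _ :: _ :: _ =>
      let M := (FT.label c).M
      if i = 0 then
        {il | ∃ j, (il.1, j) ∈ C ∧ M il.2 j ≠ OSR.bot ∧ M il.1 il.2 ≠ OSR.bot}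
      else if i = cs.length - 1 then
        {lj | ∃ a, (a, lj.2) ∈ C ∧ M a lj.1 ≠ OSR.bot ∧ M lj.1 lj.2 ≠ OSR.bot}
      else
        {lk | ∃ a b, (a, b) ∈ C ∧ M a lk.1 ≠ OSR.bot ∧ M lk.2 b ≠ OSR.bot ∧
              M lk.1 lk.2 ≠ OSR.bot ∧ M lk.2 lk.1 ≠ OSR.bot}
  | _ => ∅

/-- Contributor set of the node at path `π`, starting from the set `C` at the root. -/
def contribAt {QA : Type} {n : ℕ} : FT QA n → Set (Fin n × Fin n) → List ℕ → Set (Fin n × Fin n)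
  | _, C, [] => C
  | FT.leaf _, _, _ :: _ => ∅
  | FT.node _ cs, C, i :: rest =>
      match cs[i]? with
      | none => ∅
      | some c => contribAt c (contribStep cs C i) rest

/-- The contributor set of the root: pairs `(i,j)` with `i` initial in `B`, `j` final in `B`
and `M_{i,j} ≠ -∞`. -/
def rootContrib {Sigma QA : Type} {n : ℕ} (B : MPA Sigma (Fin n)) (t : FT QA n) :
    Set (Fin n × Fin n) :=
  {ij | B.I ij.1 ≠ ⊥ ∧ B.F ij.2 ≠ ⊥ ∧ (FT.label t).M ij.1 ij.2 ≠ OSR.bot}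

/-- The contributor set of the node at path `π` of the tree `t`. -/
def contributors {Sigma QA : Type} {n : ℕ} (B : MPA Sigma (Fin n)) (t : FT QA n)
    (π : List ℕ) : Set (Fin n × Fin n) :=
  contribAt t (rootContrib B t) π

/-- `PathLeaves A B p w xs ls q`: `ls` is the list `α_w(w₁), …, α_w(w_k)` associated with the
run of `A` on `w` from `p` to `q` with transition weights `xs`. -/
def PathLeaves {Sigma QA : Type} {nB : ℕ} (A : MPA Sigma QA) (B : MPA Sigma (Fin nB)) :
    QA → List Sigma → List ℕ → List (Elem QA nB) → QA → Prop
  | p, [], [], [], q => p = q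
  | p, a :: w, x :: xs, e :: ls, q =>
      e.p = p ∧ A.M a p e.q = ((x : ℕ) : WithBot ℕ) ∧ e.x = barNat x ∧
      (e.M = fun i j => barW (B.M a i j)) ∧ PathLeaves A B e.q w xs ls q
  | _, _, _, _, _ => False

/-- `t` is a factorisation tree on the word `w` (for the accepting run of `A` on `w`). -/
def IsFactTreeOn {Sigma QA : Type} {nB : ℕ} [Fintype QA] [DecidableEq QA]
    (A : MPA Sigma QA) (B : MPA Sigma (Fin nB)) (w : List Sigma) (t : FT QA nB) : Prop :=
  FT.WF t ∧ ∃ (p q : QA) (xs : List ℕ),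
    A.I p ≠ ⊥ ∧ A.F q ≠ ⊥ ∧ PathLeaves A B p w xs (FT.leaves t) q

/-- The node of `t` at path `π` is a fault. -/
def IsFaultAt {Sigma QA : Type} {nB : ℕ} (B : MPA Sigma (Fin nB)) (t : FT QA nB)
    (π : List ℕ) : Prop :=
  ∃ σ i, π = σ ++ [i] ∧
    ∃ lbl cs, FT.subtreeAt t σ = some (FT.node lbl cs) ∧ 3 ≤ cs.length ∧
      0 < i ∧ i < cs.length - 1 ∧
      ∃ c, cs[i]? = some c ∧ (FT.label c).x = OSR.one ∧
        ∀ ij ∈ contributors B t π, (FT.label c).M ij.1 ij.2 = OSR.zero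

/-- Number of leaves strictly to the left of the node at path `π`. -/
def offsetAt {QA : Type} {n : ℕ} : FT QA n → List ℕ → ℕ
  | _, [] => 0
  | FT.leaf _, _ :: _ => 0
  | FT.node _ cs, i :: rest =>
      ((cs.take i).map fun c => (FT.leaves c).length).sum +
        match cs[i]? with
        | none => 0
        | some c => offsetAt c rest

/-- Height of the node at path `π`. -/
def heightAt {QA : Type} {n : ℕ} (t : FT QA n) (π : List ℕ) : ℕ :=
  match FT.subtreeAt t π with
  | some c => FT.height c
  | none => 0

/-- The β-labelling: `beta t π` is the β-label of the root of `t`, where `π` is the path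
from the root of `t` down to the fault `ν₁`. -/
def beta {QA : Type} {n : ℕ} : FT QA n → List ℕ → Elem QA n
  | t, [] => FT.label t
  | FT.leaf e, _ :: _ => e
  | FT.node lbl cs, i :: rest =>
      match cs[i]? with
      | none => lbl
      | some c =>
        match rest with
        | [] => estab (FT.label c)
        | j :: rest' =>
          let inner := beta c (j :: rest')
          if cs.length = 2 then
            (if i = 0 then eprod inner ((cs[1]?.map FT.label).getD lbl)
             else eprod ((cs[0]?.map FT.label).getD lbl) inner)
          else
            if i = 0 then eprod inner (FT.label c)
            else if i = cs.length - 1 then eprod (FT.label c) inner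
            else eflat inner

namespace Aux

open OSR

instance : Fintype OSR :=
  ⟨⟨[OSR.bot, OSR.zero, OSR.one, OSR.inf], by decide⟩, by intro x; cases x <;> decide⟩

lemma add_bot (a : OSR) : a.add OSR.bot = OSR.bot := by cases a <;> rfl
lemma bot_add (a : OSR) : OSR.bot.add a = OSR.bot := by cases a <;> rfl
lemma add_assoc {a b c : OSR} : (a.add b).add c = a.add (b.add c) := by (try revert c); (try revert b); revert a; decide
lemma add_sup {a b c : OSR} : a.add (b.sup c) = (a.add b).sup (a.add c) := by (try revert c); (try revert b); revert a; decide
lemma sup_add {a b c : OSR} : (a.sup b).add c = (a.add c).sup (b.add c) := by (try revert c); (try revert b); revert a; decide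
lemma sup_assoc {a b c : OSR} : (a.sup b).sup c = a.sup (b.sup c) := by (try revert c); (try revert b); revert a; decide
lemma sup_comm {a b : OSR} : a.sup b = b.sup a := by (try revert c); (try revert b); revert a; decide
lemma sup_bot (a : OSR) : a.sup OSR.bot = a := by cases a <;> rfl
lemma bot_sup (a : OSR) : OSR.bot.sup a = a := by cases a <;> rfl
lemma sup_eq_bot_iff {a b : OSR} : a.sup b = OSR.bot ↔ a = OSR.bot ∧ b = OSR.bot := by (try revert c); (try revert b); revert a; decide
lemma sup_eq_inf_iff {a b : OSR} : a.sup b = OSR.inf ↔ a = OSR.inf ∨ b = OSR.inf := by (try revert c); (try revert b); revert a; decide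
lemma add_eq_inf_iff {a b : OSR} :
    a.add b = OSR.inf ↔ (a ≠ OSR.bot ∧ b ≠ OSR.bot ∧ (a = OSR.inf ∨ b = OSR.inf)) := by (try revert c); (try revert b); revert a; decide
lemma add_ne_bot {a b : OSR} (ha : a ≠ OSR.bot) (hb : b ≠ OSR.bot) : a.add b ≠ OSR.bot := by
  revert ha hb; revert a b; decide
lemma bar_add {a b : OSR} : (a.add b).bar = a.bar.add b.bar := by (try revert c); (try revert b); revert a; decide
lemma bar_sup {a b : OSR} : (a.sup b).bar = a.bar.sup b.bar := by (try revert c); (try revert b); revert a; decide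
lemma bar_bar (a : OSR) : a.bar.bar = a.bar := by cases a <;> rfl
lemma bar_sharp (a : OSR) : a.sharp.bar = a.bar := by cases a <;> rfl
lemma bar_ne_bot {a : OSR} (h : a.bar ≠ OSR.bot) : a ≠ OSR.bot := by
  revert h; cases a <;> decide
lemma ne_bot_of_bar_eq_one {a : OSR} (h : a.bar = OSR.one) : a ≠ OSR.bot := by
  intro hh; subst hh; exact absurd h (by decide)
lemma bar_eq_one_of_inf {a : OSR} (h : a = OSR.inf) : a.bar = OSR.one := by subst h; rfl
lemma ne_inf_of_bar_fix {a : OSR} (h : a.bar = a) : a ≠ OSR.inf := by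
  intro hh; subst hh; exact absurd h (by decide)
lemma bar_ne_bot_iff (a : OSR) : a.bar ≠ OSR.bot ↔ a ≠ OSR.bot := by cases a <;> decide

end Aux
namespace Aux

def lsup {α : Type} (l : List α) (f : α → OSR) : OSR :=
  l.foldr (fun j acc => (f j).sup acc) OSR.bot

lemma lsup_nil {α : Type} (f : α → OSR) : lsup [] f = OSR.bot := rfl
lemma lsup_cons {α : Type} (x : α) (l : List α) (f : α → OSR) :
    lsup (x :: l) f = (f x).sup (lsup l f) := rfl

lemma osum_eq_lsup {n : ℕ} (f : Fin n → OSR) : osum f = lsup (List.finRange n) f := rfl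

lemma lsup_eq_bot_iff {α : Type} (l : List α) (f : α → OSR) :
    lsup l f = OSR.bot ↔ ∀ x ∈ l, f x = OSR.bot := by
  induction l with
  | nil => simp [lsup_nil]
  | cons a l ih => rw [lsup_cons, sup_eq_bot_iff, ih]; simp

lemma lsup_eq_inf_iff {α : Type} (l : List α) (f : α → OSR) :
    lsup l f = OSR.inf ↔ ∃ x ∈ l, f x = OSR.inf := by
  induction l with
  | nil => rw [lsup_nil]; simp
  | cons a l ih => rw [lsup_cons, sup_eq_inf_iff, ih]; simp

lemma add_lsup {α : Type} (a : OSR) (l : List α) (f : α → OSR) :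
    a.add (lsup l f) = lsup l (fun x => a.add (f x)) := by
  induction l with
  | nil => rw [lsup_nil, lsup_nil, add_bot]
  | cons x l ih => rw [lsup_cons, lsup_cons, add_sup, ih]

lemma lsup_add {α : Type} (a : OSR) (l : List α) (f : α → OSR) :
    (lsup l f).add a = lsup l (fun x => (f x).add a) := by
  induction l with
  | nil => rw [lsup_nil, lsup_nil, bot_add]
  | cons x l ih => rw [lsup_cons, lsup_cons, sup_add, ih]

lemma lsup_sup {α : Type} (l : List α) (f g : α → OSR) :
    lsup l (fun x => (f x).sup (g x)) = (lsup l f).sup (lsup l g) := by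
  induction l with
  | nil => rfl
  | cons x l ih =>
    rw [lsup_cons, lsup_cons, lsup_cons, ih]
    generalize (lsup l f) = F
    generalize (lsup l g) = G
    rw [sup_assoc, ← sup_assoc (a := g x), sup_comm (a := g x) (b := F), sup_assoc, ← sup_assoc]

lemma lsup_congr {α : Type} {l : List α} {f g : α → OSR} (h : ∀ x ∈ l, f x = g x) :
    lsup l f = lsup l g := by
  induction l with
  | nil => rfl
  | cons x l ih =>
    rw [lsup_cons, lsup_cons, h x (by simp), ih (fun y hy => h y (by simp [hy]))]

lemma lsup_const_bot {α : Type} (l : List α) : lsup l (fun _ => OSR.bot) = OSR.bot := by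
  induction l with
  | nil => rfl
  | cons x l ih => rw [lsup_cons, ih]; rfl

lemma lsup_swap {α β : Type} (l₁ : List α) (l₂ : List β) (g : α → β → OSR) :
    lsup l₁ (fun i => lsup l₂ (g i)) = lsup l₂ (fun j => lsup l₁ (fun i => g i j)) := by
  induction l₁ with
  | nil =>
    rw [lsup_nil]
    symm
    calc lsup l₂ (fun j => lsup ([] : List α) fun i => g i j)
        = lsup l₂ (fun _ => OSR.bot) := lsup_congr (fun _ _ => rfl)
      _ = OSR.bot := lsup_const_bot l₂
  | cons x l₁ ih =>
    rw [lsup_cons, ih, ← lsup_sup]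
    exact lsup_congr fun j hj => (lsup_cons x l₁ (fun i => g i j)).symm

lemma bar_lsup {α : Type} (l : List α) (f : α → OSR) :
    (lsup l f).bar = lsup l (fun x => (f x).bar) := by
  induction l with
  | nil => rfl
  | cons x l ih => rw [lsup_cons, lsup_cons, bar_sup, ih]

lemma osum_eq_bot_iff {n : ℕ} (f : Fin n → OSR) : osum f = OSR.bot ↔ ∀ j, f j = OSR.bot := by
  rw [osum_eq_lsup, lsup_eq_bot_iff]; simp [List.mem_finRange]

lemma osum_eq_inf_iff {n : ℕ} (f : Fin n → OSR) : osum f = OSR.inf ↔ ∃ j, f j = OSR.inf := by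
  rw [osum_eq_lsup, lsup_eq_inf_iff]; simp [List.mem_finRange]

lemma osum_ne_bot_of {n : ℕ} {f : Fin n → OSR} (j : Fin n) (h : f j ≠ OSR.bot) :
    osum f ≠ OSR.bot := fun hc => h ((osum_eq_bot_iff f).mp hc j)

lemma add_osum {n : ℕ} (a : OSR) (f : Fin n → OSR) :
    a.add (osum f) = osum (fun x => a.add (f x)) := add_lsup _ _ _

lemma osum_add {n : ℕ} (a : OSR) (f : Fin n → OSR) :
    (osum f).add a = osum (fun x => (f x).add a) := lsup_add _ _ _

lemma osum_swap {n : ℕ} (g : Fin n → Fin n → OSR) :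
    osum (fun i => osum (g i)) = osum (fun j => osum (fun i => g i j)) := lsup_swap _ _ _

lemma bar_osum {n : ℕ} (f : Fin n → OSR) : (osum f).bar = osum (fun x => (f x).bar) :=
  bar_lsup _ _

lemma osum_congr {n : ℕ} {f g : Fin n → OSR} (h : ∀ x, f x = g x) : osum f = osum g :=
  lsup_congr (fun x _ => h x)

lemma omul_assoc {n : ℕ} (M N P : Fin n → Fin n → OSR) :
    omul (omul M N) P = omul M (omul N P) := by
  funext i l
  show osum (fun k => (osum fun j => (M i j).add (N j k)).add (P k l)) = _
  calc osum (fun k => (osum fun j => (M i j).add (N j k)).add (P k l))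
      = osum (fun k => osum fun j => ((M i j).add (N j k)).add (P k l)) := by
        refine osum_congr fun k => ?_; rw [osum_add]
    _ = osum (fun j => osum fun k => ((M i j).add (N j k)).add (P k l)) := osum_swap _
    _ = osum (fun j => (M i j).add (osum fun k => (N j k).add (P k l))) := by
        refine osum_congr fun j => ?_
        rw [add_osum]
        exact osum_congr fun k => add_assoc
    _ = _ := rfl

lemma obar_omul {n : ℕ} (M N : Fin n → Fin n → OSR) :
    obar (omul M N) = omul (obar M) (obar N) := by
  funext i k
  show (osum fun j => (M i j).add (N j k)).bar = osum fun j => ((M i j).bar.add ((N j k).bar))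
  rw [bar_osum]
  exact osum_congr fun j => bar_add

lemma obar_obar {n : ℕ} (M : Fin n → Fin n → OSR) : obar (obar M) = obar M := by
  funext i j; exact bar_bar _

lemma omul_entry_inf {n : ℕ} {M N : Fin n → Fin n → OSR} {i k : Fin n}
    (h : omul M N i k = OSR.inf) :
    ∃ j, (M i j).add (N j k) = OSR.inf := (osum_eq_inf_iff _).mp h

lemma omul_entry_ne_bot {n : ℕ} {M N : Fin n → Fin n → OSR} {i k : Fin n} (j : Fin n)
    (h1 : M i j ≠ OSR.bot) (h2 : N j k ≠ OSR.bot) : omul M N i k ≠ OSR.bot :=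
  osum_ne_bot_of j (add_ne_bot h1 h2)

/-- Transitivity of non-`⊥` entries in an idempotent matrix. -/
lemma idem_trans {n : ℕ} {D : Fin n → Fin n → OSR} (hD : omul D D = D) {x y z : Fin n}
    (h1 : D x y ≠ OSR.bot) (h2 : D y z ≠ OSR.bot) : D x z ≠ OSR.bot := by
  rw [← hD]; exact omul_entry_ne_bot y h1 h2

end Aux
namespace Aux

variable {QA : Type} {n : ℕ}

lemma eprod_p (a b : Elem QA n) : (eprod a b).p = a.p := rfl
lemma eprod_q (a b : Elem QA n) : (eprod a b).q = b.q := rfl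

lemma eprod_assoc (a b c : Elem QA n) : eprod (eprod a b) c = eprod a (eprod b c) := by
  unfold eprod
  simp [add_assoc, omul_assoc]

lemma ebar_p (a : Elem QA n) : (ebar a).p = a.p := rfl
lemma ebar_q (a : Elem QA n) : (ebar a).q = a.q := rfl

lemma ebar_eprod (a b : Elem QA n) : ebar (eprod a b) = eprod (ebar a) (ebar b) := by
  unfold ebar eprod
  simp [bar_add, obar_omul]

lemma barW_bar (v : WithBot ℕ) : (barW v).bar = barW v := by
  induction v using WithBot.recBotCoe with
  | bot => rfl
  | coe m =>
    show (if m = 0 then OSR.zero else OSR.one).bar = barW (m : ℕ)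
    have : barW ((m : ℕ) : WithBot ℕ) = if m = 0 then OSR.zero else OSR.one := rfl
    rw [this]
    split <;> rfl

lemma barW_ne_bot_iff (v : WithBot ℕ) : barW v ≠ OSR.bot ↔ v ≠ ⊥ := by
  induction v using WithBot.recBotCoe with
  | bot => simp [barW]
  | coe m =>
    constructor
    · intro _ hc; exact absurd hc (by simp)
    · intro _
      show (if m = 0 then OSR.zero else OSR.one) ≠ OSR.bot
      split <;> decide

lemma barNat_ne_bot (x : ℕ) : barNat x ≠ OSR.bot := by
  unfold barNat; split <;> decide

section
variable {Sigma : Type} [DecidableEq QA] {A : MPA Sigma QA} {B : MPA Sigma (Fin n)}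

lemma inAsymp_of_inPaths {x} (h : InPathsO A B x) : InAsympO A B x := by
  induction h with
  | gen e he => exact InAsympO.gen e he
  | mul x y _ _ ihx ihy => exact InAsympO.mul x y ihx ihy

lemma inPaths_mul {e f : Elem QA n} (he : InPathsO A B (some e)) (hf : InPathsO A B (some f))
    (hq : e.q = f.p) : InPathsO A B (some (eprod e f)) := by
  have := InPathsO.mul _ _ he hf
  rwa [omulO, if_pos hq] at this

lemma inAsymp_mul {e f : Elem QA n} (he : InAsympO A B (some e)) (hf : InAsympO A B (some f))
    (hq : e.q = f.p) : InAsympO A B (some (eprod e f)) := by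
  have := InAsympO.mul _ _ he hf
  rwa [omulO, if_pos hq] at this

lemma gen_good {e : Elem QA n} (he : IsGen A B e) :
    e.x ≠ OSR.bot ∧ obar e.M = e.M := by
  obtain ⟨a, p, q, x, _, rfl⟩ := he
  refine ⟨barNat_ne_bot x, ?_⟩
  funext i j
  exact barW_bar _

lemma eprod_x_ne_bot {a b : Elem QA n} (ha : a.x ≠ OSR.bot) (hb : b.x ≠ OSR.bot) :
    (eprod a b).x ≠ OSR.bot := add_ne_bot ha hb

lemma eprod_M_fix {a b : Elem QA n} (ha : obar a.M = a.M) (hb : obar b.M = b.M) :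
    obar (eprod a b).M = (eprod a b).M := by
  show obar (omul a.M b.M) = omul a.M b.M
  rw [obar_omul, ha, hb]

end

/-! ### foldl lemmas -/

lemma foldl_p (l : List (Elem QA n)) (h : Elem QA n) : (l.foldl eprod h).p = h.p := by
  induction l generalizing h with
  | nil => rfl
  | cons x l ih => exact (ih (eprod h x)).trans rfl

lemma foldl_q (l : List (Elem QA n)) (h : Elem QA n) :
    (l.foldl eprod h).q = (l.getLast?.getD h).q := by
  induction l generalizing h with
  | nil => rfl
  | cons x l ih =>
    cases l with
    | nil => rfl
    | cons y l =>
      show (List.foldl eprod (eprod h x) (y :: l)).q = _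
      rw [ih (eprod h x), List.getLast?_cons_cons]
      obtain ⟨z, hz⟩ : ∃ z, (y :: l).getLast? = some z :=
        ⟨(y :: l).getLast (by simp), List.getLast?_eq_getLast (by simp)⟩
      rw [hz]; rfl

lemma chain_replace_head {x y : Elem QA n} {l : List (Elem QA n)}
    (h : List.Chain' (fun a b : Elem QA n => a.q = b.p) (x :: l)) (hxy : y.q = x.q) :
    List.Chain' (fun a b : Elem QA n => a.q = b.p) (y :: l) := by
  cases l with
  | nil => exact List.isChain_singleton _
  | cons z l =>
    unfold List.Chain' at *; rw [List.isChain_cons_cons] at *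
    exact ⟨hxy.trans h.1, h.2⟩

section
variable {Sigma : Type} [DecidableEq QA] {A : MPA Sigma QA} {B : MPA Sigma (Fin n)}

lemma foldl_inPaths : ∀ (l : List (Elem QA n)) (h : Elem QA n),
    InPathsO A B (some h) → (∀ e ∈ l, InPathsO A B (some e)) →
    List.Chain' (fun a b : Elem QA n => a.q = b.p) (h :: l) →
    InPathsO A B (some (l.foldl eprod h)) := by
  intro l
  induction l with
  | nil => intro h hh _ _; exact hh
  | cons x l ih =>
    intro h hh hl hc
    unfold List.Chain' at hc; rw [List.isChain_cons_cons] at hc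
    exact ih (eprod h x) (inPaths_mul hh (hl x (by simp)) hc.1)
      (fun e he => hl e (by simp [he]))
      (chain_replace_head hc.2 rfl)

end

lemma foldl_x_ne_bot : ∀ (l : List (Elem QA n)) (h : Elem QA n),
    h.x ≠ OSR.bot → (∀ e ∈ l, e.x ≠ OSR.bot) → (l.foldl eprod h).x ≠ OSR.bot := by
  intro l
  induction l with
  | nil => intro h hh _; exact hh
  | cons x l ih =>
    intro h hh hl
    exact ih (eprod h x) (eprod_x_ne_bot hh (hl x (by simp))) (fun e he => hl e (by simp [he]))

lemma foldl_M_fix : ∀ (l : List (Elem QA n)) (h : Elem QA n),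
    obar h.M = h.M → (∀ e ∈ l, obar e.M = e.M) →
    obar (l.foldl eprod h).M = (l.foldl eprod h).M := by
  intro l
  induction l with
  | nil => intro h hh _; exact hh
  | cons x l ih =>
    intro h hh hl
    exact ih (eprod h x) (eprod_M_fix hh (hl x (by simp))) (fun e he => hl e (by simp [he]))

/-! ### leaves lemmas -/

lemma leaves_leaf (e : Elem QA n) : FT.leaves (FT.leaf e) = [e] := rfl

lemma leaves_node (lbl : Elem QA n) (cs : List (FT QA n)) :
    FT.leaves (FT.node lbl cs) = FT.leavesList cs := rfl

lemma leavesList_nil : FT.leavesList ([] : List (FT QA n)) = [] := rfl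

lemma leavesList_cons (t : FT QA n) (ts : List (FT QA n)) :
    FT.leavesList (t :: ts) = FT.leaves t ++ FT.leavesList ts := rfl

lemma mem_leavesList_of_mem {c : FT QA n} {e : Elem QA n} :
    ∀ {cs : List (FT QA n)}, c ∈ cs → e ∈ FT.leaves c → e ∈ FT.leavesList cs := by
  intro cs
  induction cs with
  | nil => intro h; cases h
  | cons t ts ih =>
    intro hc he
    rw [leavesList_cons, List.mem_append]
    rcases List.mem_cons.mp hc with rfl | hc
    · exact Or.inl he
    · exact Or.inr (ih hc he)

lemma leavesList_ne_nil {cs : List (FT QA n)} {c : FT QA n} (hc : c ∈ cs)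
    (h : FT.leaves c ≠ []) : FT.leavesList cs ≠ [] := by
  obtain ⟨e, he⟩ := List.exists_mem_of_ne_nil _ h
  intro hcon
  have := mem_leavesList_of_mem hc he
  rw [hcon] at this
  cases this

lemma mem_of_getLast?' {α : Type} {l : List α} {a : α} (h : l.getLast? = some a) : a ∈ l := by
  obtain ⟨hne, rfl⟩ := List.mem_getLast?_eq_getLast (show a ∈ l.getLast? from h)
  exact List.getLast_mem hne

lemma leavesList_last : ∀ (cs : List (FT QA n)), cs ≠ [] →
    (∀ c ∈ cs, FT.leaves c ≠ []) →
    ∃ clast, cs.getLast? = some clast ∧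
      (FT.leavesList cs).getLast? = (FT.leaves clast).getLast? := by
  intro cs
  induction cs with
  | nil => intro h; exact absurd rfl h
  | cons c cs ih =>
    intro _ hl
    cases cs with
    | nil =>
      refine ⟨c, rfl, ?_⟩
      rw [leavesList_cons, leavesList_nil, List.append_nil]
    | cons c' cs' =>
      obtain ⟨clast, h1, h2⟩ := ih (by simp) (fun d hd => hl d (by simp [hd]))
      refine ⟨clast, ?_, ?_⟩
      · rw [List.getLast?_cons_cons]; exact h1
      · rw [leavesList_cons, List.getLast?_append_of_ne_nil, h2]
        have : clast ∈ c' :: cs' := mem_of_getLast?' h1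
        exact leavesList_ne_nil this (hl clast (by simp [this]))

end Aux
namespace Aux

variable {QA : Type} {n : ℕ}

lemma sharp_eq_inf_iff {a : OSR} : a.sharp = OSR.inf ↔ a = OSR.one ∨ a = OSR.inf := by
  revert a; decide

lemma add_ne_bot_parts {a b : OSR} (h : a.add b ≠ OSR.bot) : a ≠ OSR.bot ∧ b ≠ OSR.bot := by
  revert h; revert a; revert b; decide

lemma osum_ne_bot_iff {f : Fin n → OSR} : osum f ≠ OSR.bot ↔ ∃ j, f j ≠ OSR.bot := by
  constructor
  · intro h
    by_contra hc
    push_neg at hc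
    exact h ((osum_eq_bot_iff f).mpr hc)
  · rintro ⟨j, hj⟩ hc
    exact hj ((osum_eq_bot_iff f).mp hc j)

lemma bar_fix_entry_ne_inf {M : Fin n → Fin n → OSR} (h : obar M = M) (i j : Fin n) :
    M i j ≠ OSR.inf := by
  have := congrFun (congrFun h i) j
  exact ne_inf_of_bar_fix this

lemma obar_mdiagSharp (M : Fin n → Fin n → OSR) : obar (mdiagSharp M) = obar M := by
  funext i j
  unfold obar mdiagSharp
  split
  · exact bar_sharp _
  · rfl

lemma obar_mstab {M : Fin n → Fin n → OSR} (h : omul M M = M) :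
    obar (mstab M) = obar M := by
  have hD : omul (obar M) (obar M) = obar M := by rw [← obar_omul, h]
  unfold mstab
  rw [obar_omul, obar_omul, obar_mdiagSharp, hD, hD]

lemma obar_mangle (P : Fin n → Fin n → OSR) : obar (mangle P) = obar P := by
  funext i j
  unfold obar mangle
  split
  · rfl
  · exact bar_bar _

lemma obar_mflat {N : Fin n → Fin n → OSR} (h : omul (obar N) (obar N) = obar N) :
    obar (mflat N) = obar N := by
  unfold mflat
  rw [obar_omul, obar_omul, obar_mangle, obar_obar]
  have h3 : obar (omul N (omul N N)) = obar N := by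
    rw [obar_omul, obar_omul, h, h]
  rw [h3, h, h]

lemma ebar_estab {f : Elem QA n} (hpq : f.p = f.q) (hx : f.x = OSR.one)
    (hM : omul f.M f.M = f.M) : ebar (estab f) = ebar f := by
  unfold ebar estab
  rw [bar_sharp, obar_mstab hM, hpq]

lemma ebar_eflat {f : Elem QA n} (hpq : f.p = f.q)
    (hM : omul (obar f.M) (obar f.M) = obar f.M) : ebar (eflat f) = ebar f := by
  unfold ebar eflat
  rw [obar_mflat hM, hpq]

lemma mstab_entry_inf {M : Fin n → Fin n → OSR} (hfix : obar M = M) {i j : Fin n}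
    (h : mstab M i j = OSR.inf) :
    ∃ k, M i k ≠ OSR.bot ∧ M k k = OSR.one ∧ M k j ≠ OSR.bot := by
  have hni := bar_fix_entry_ne_inf hfix
  obtain ⟨l, hl⟩ := omul_entry_inf h
  rw [add_eq_inf_iff] at hl
  obtain ⟨h1, h2, h3⟩ := hl
  have hin : omul M (mdiagSharp M) i l = OSR.inf := by
    rcases h3 with h3 | h3
    · exact h3
    · exact absurd h3 (hni l j)
  obtain ⟨k, hk⟩ := omul_entry_inf hin
  rw [add_eq_inf_iff] at hk
  obtain ⟨k1, k2, k3⟩ := hk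
  have hds : mdiagSharp M k l = OSR.inf := by
    rcases k3 with k3 | k3
    · exact absurd k3 (hni i k)
    · exact k3
  unfold mdiagSharp at hds
  by_cases hkl : k = l
  · subst hkl
    rw [if_pos rfl] at hds
    rcases sharp_eq_inf_iff.mp hds with ho | ho
    · exact ⟨k, k1, ho, h2⟩
    · exact absurd ho (hni k k)
  · rw [if_neg hkl] at hds
    exact absurd hds (hni k l)

lemma mflat_entry_inf {N : Fin n → Fin n → OSR} {i j : Fin n}
    (h : mflat N i j = OSR.inf) :
    ∃ k u v, obar N i k ≠ OSR.bot ∧ obar N k j ≠ OSR.bot ∧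
      N k u ≠ OSR.bot ∧ N u v ≠ OSR.bot ∧ N v k ≠ OSR.bot ∧
      (N k u = OSR.inf ∨ N u v = OSR.inf ∨ N v k = OSR.inf) := by
  have hDni : ∀ a b, obar N a b ≠ OSR.inf := bar_fix_entry_ne_inf (obar_obar N)
  obtain ⟨k, hk⟩ := omul_entry_inf h
  rw [add_eq_inf_iff] at hk
  obtain ⟨h1, _, h3⟩ := hk
  have hin : omul (mangle (omul N (omul N N))) (obar N) k j = OSR.inf := by
    rcases h3 with h3 | h3
    · exact absurd h3 (hDni i k)
    · exact h3
  obtain ⟨l, hl⟩ := omul_entry_inf hin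
  rw [add_eq_inf_iff] at hl
  obtain ⟨l1, l2, l3⟩ := hl
  have hmg : mangle (omul N (omul N N)) k l = OSR.inf := by
    rcases l3 with l3 | l3
    · exact l3
    · exact absurd l3 (hDni l j)
  unfold mangle at hmg
  by_cases hkl : k = l
  · subst hkl
    rw [if_pos rfl] at hmg
    -- N³ k k = inf
    obtain ⟨u, hu⟩ := omul_entry_inf hmg
    rw [add_eq_inf_iff] at hu
    obtain ⟨u1, u2, u3⟩ := hu
    rcases u3 with u3 | u3
    · -- N k u = inf, decompose (N²) u k ≠ bot
      have : ∃ v, (N u v).add (N v k) ≠ OSR.bot := by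
        rw [← osum_ne_bot_iff]
        exact u2
      obtain ⟨v, hv⟩ := this
      obtain ⟨v1, v2⟩ := add_ne_bot_parts hv
      exact ⟨k, u, v, h1, l2, u1, v1, v2, Or.inl u3⟩
    · -- N² u k = inf
      obtain ⟨v, hv⟩ := omul_entry_inf u3
      rw [add_eq_inf_iff] at hv
      obtain ⟨v1, v2, v3⟩ := hv
      exact ⟨k, u, v, h1, l2, u1, v1, v2, Or.inr (by tauto)⟩
  · rw [if_neg hkl] at hmg
    have := congrFun (congrFun (obar_obar (omul N (omul N N))) k) l
    exact absurd hmg (fun hc => by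
      have : ((omul N (omul N N)) k l).bar = OSR.inf := hc
      cases hb : (omul N (omul N N)) k l <;> rw [hb] at this <;> exact absurd this (by decide))

lemma getLast?_map {α β : Type} (f : α → β) : ∀ (l : List α),
    (l.map f).getLast? = l.getLast?.map f := by
  intro l
  induction l with
  | nil => rfl
  | cons a l ih =>
    cases l with
    | nil => rfl
    | cons b l =>
      rw [List.map_cons, List.map_cons, List.getLast?_cons_cons, List.getLast?_cons_cons, ← List.map_cons, ih]

noncomputable instance instFintypeElem [Fintype QA] : Fintype (Elem QA n) :=
  Fintype.ofInjective (fun e => (e.p, e.x, e.q, e.M))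
    (by rintro ⟨⟩ ⟨⟩ h; simp_all)

section
variable {Sigma : Type} [DecidableEq QA] {A : MPA Sigma QA} {B : MPA Sigma (Fin n)}

lemma sizeS_pos [Fintype QA] {e : Elem QA n} (h : InPathsO A B (some e)) :
    1 ≤ sizeS A B := by
  unfold sizeS
  have hfin : {x : Option (Elem QA n) | InPathsO A B x}.Finite :=
    Set.finite_univ.subset (Set.subset_univ _)
  exact (Set.ncard_pos hfin).mpr ⟨_, h⟩

lemma label_good : ∀ {t : FT QA n}, FT.WF t → (∀ e ∈ FT.leaves t, IsGen A B e) →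
    InPathsO A B (some (FT.label t)) ∧ (FT.label t).x ≠ OSR.bot ∧
    obar (FT.label t).M = (FT.label t).M ∧ FT.leaves t ≠ [] ∧
    (∀ e₀, (FT.leaves t).head? = some e₀ → (FT.label t).p = e₀.p) ∧
    (∀ e₁, (FT.leaves t).getLast? = some e₁ → (FT.label t).q = e₁.q) := by
  intro t hwf
  induction hwf with
  | leaf e =>
    intro hgen
    have he : IsGen A B e := hgen e (by rw [leaves_leaf]; simp)
    obtain ⟨hx, hM⟩ := gen_good he
    refine ⟨InPathsO.gen e he, hx, hM, by rw [leaves_leaf]; simp, ?_, ?_⟩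
    · intro e₀ h
      rw [leaves_leaf] at h
      simp at h
      subst h
      rfl
    · intro e₁ h
      rw [leaves_leaf] at h
      simp at h
      subst h
      rfl
  | node lbl cs hlen hwfc hchain hfold hidem ih =>
    intro hgen
    obtain ⟨c₀, cs', rfl⟩ : ∃ c₀ cs', cs = c₀ :: cs' := by
      cases cs with
      | nil => simp at hlen
      | cons a l => exact ⟨a, l, rfl⟩
    have hlbl : lbl = (cs'.map FT.label).foldl eprod (FT.label c₀) := hfold _ _ (by simp)
    have hgood : ∀ c ∈ c₀ :: cs',
        InPathsO A B (some (FT.label c)) ∧ (FT.label c).x ≠ OSR.bot ∧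
        obar (FT.label c).M = (FT.label c).M ∧ FT.leaves c ≠ [] ∧
        (∀ e₀, (FT.leaves c).head? = some e₀ → (FT.label c).p = e₀.p) ∧
        (∀ e₁, (FT.leaves c).getLast? = some e₁ → (FT.label c).q = e₁.q) :=
      fun c hc => ih c hc (fun e he => hgen e (mem_leavesList_of_mem hc he))
    have hg0 := hgood c₀ (by simp)
    have hmap : ∀ e ∈ cs'.map FT.label,
        InPathsO A B (some e) ∧ e.x ≠ OSR.bot ∧ obar e.M = e.M := by
      intro e he
      obtain ⟨c, hc, rfl⟩ := List.mem_map.mp he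
      obtain ⟨a1, a2, a3, _⟩ := hgood c (by simp [hc])
      exact ⟨a1, a2, a3⟩
    have hchain' : List.Chain' (fun a b : Elem QA n => a.q = b.p)
        (FT.label c₀ :: cs'.map FT.label) := by
      have := hchain
      rw [List.map_cons] at this
      exact this
    have hlabel : FT.label (FT.node lbl (c₀ :: cs')) = lbl := rfl
    rw [hlabel]
    refine ⟨?_, ?_, ?_, ?_, ?_, ?_⟩
    · rw [hlbl]
      exact foldl_inPaths _ _ hg0.1 (fun e he => (hmap e he).1) hchain'
    · rw [hlbl]
      exact foldl_x_ne_bot _ _ hg0.2.1 (fun e he => (hmap e he).2.1)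
    · rw [hlbl]
      exact foldl_M_fix _ _ hg0.2.2.1 (fun e he => (hmap e he).2.2)
    · rw [leaves_node]
      exact leavesList_ne_nil (by simp) hg0.2.2.2.1
    · intro e₀ h
      rw [leaves_node, leavesList_cons, List.head?_append_of_ne_nil _ hg0.2.2.2.1] at h
      rw [hlbl, foldl_p]
      exact hg0.2.2.2.2.1 e₀ h
    · intro e₁ h
      obtain ⟨clast, h1, h2⟩ := leavesList_last (c₀ :: cs') (by simp)
        (fun c hc => (hgood c hc).2.2.2.1)
      rw [leaves_node, h2] at h
      rw [hlbl, foldl_q, getLast?_map]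
      cases cs' with
      | nil =>
        simp at h1
        subst h1
        exact hg0.2.2.2.2.2 e₁ h
      | cons c₁ cs'' =>
        rw [List.getLast?_cons_cons] at h1
        rw [h1]
        exact (hgood clast (mem_of_getLast?' (by rw [List.getLast?_cons_cons]; exact h1))).2.2.2.2.2 e₁ h

end

end Aux
namespace Aux

variable {QA : Type} {n : ℕ}

section
variable {Sigma : Type} {A : MPA Sigma QA} {B : MPA Sigma (Fin n)}

lemma pathLeaves_props : ∀ (ls : List (Elem QA n)) (p : QA) (w : List Sigma)
    (xs : List ℕ) (q : QA), PathLeaves A B p w xs ls q →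
    (∀ e ∈ ls, IsGen A B e) ∧ (∀ e₀, ls.head? = some e₀ → e₀.p = p) ∧
    (∀ e₁, ls.getLast? = some e₁ → e₁.q = q) := by
  intro ls
  induction ls with
  | nil =>
    intro p w xs q h
    exact ⟨by simp, by simp, by simp⟩
  | cons e ls ih =>
    intro p w xs q h
    cases w with
    | nil =>
      cases xs with
      | nil => exact absurd h (fun hc => hc)
      | cons x xs => exact absurd h (fun hc => hc)
    | cons a w =>
      cases xs with
      | nil => exact absurd h (fun hc => hc)
      | cons x xs =>
        obtain ⟨hp, hM, hx, hMat, hrest⟩ := h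
        have hgen : IsGen A B e := by
          refine ⟨a, p, e.q, x, hM, ?_⟩
          cases e with
          | mk ep ex eq eM =>
            simp only at hp hx hMat
            rw [hp, hx, hMat]
        obtain ⟨ih1, ih2, ih3⟩ := ih e.q w xs q hrest
        refine ⟨?_, ?_, ?_⟩
        · intro f hf
          rcases List.mem_cons.mp hf with rfl | hf
          · exact hgen
          · exact ih1 f hf
        · intro e₀ h0
          simp at h0
          subst h0
          exact hp
        · intro e₁ h1
          cases ls with
          | nil =>
            simp at h1
            subst h1
            cases w with
            | nil =>
              cases xs with
              | nil => exact hrest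
              | cons y ys => exact absurd hrest (fun hc => hc)
            | cons b w =>
              cases xs with
              | nil => exact absurd hrest (fun hc => hc)
              | cons y ys => exact absurd hrest (fun hc => hc)
          | cons f ls =>
            rw [List.getLast?_cons_cons] at h1
            exact ih3 e₁ h1
end

lemma height_le_of_mem {c : FT QA n} : ∀ {cs : List (FT QA n)}, c ∈ cs →
    FT.height c ≤ FT.heightList cs := by
  intro cs
  induction cs with
  | nil => intro h; cases h
  | cons t ts ih =>
    intro h
    rcases List.mem_cons.mp h with rfl | h
    · show _ ≤ max (FT.height c) (FT.heightList ts)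
      exact le_max_left _ _
    · show _ ≤ max (FT.height t) (FT.heightList ts)
      exact le_trans (ih h) (le_max_right _ _)

lemma subtreeAt_height : ∀ (σ : List ℕ) (t s : FT QA n),
    FT.subtreeAt t σ = some s → σ.length + FT.height s ≤ FT.height t := by
  intro σ
  induction σ with
  | nil =>
    intro t s h
    injection h with h
    subst h
    simp
  | cons i σ ih =>
    intro t s h
    cases t with
    | leaf e =>
      exact absurd h (by rw [FT.subtreeAt]; simp [FT.childAt])
    | node lbl cs =>
      rw [FT.subtreeAt] at h
      cases hc : FT.childAt (FT.node lbl cs) i with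
      | none => rw [hc] at h; cases h
      | some c =>
        rw [hc] at h
        have h1 := ih c s h
        have hmem : c ∈ cs := List.mem_of_getElem? hc
        have h2 : FT.height c ≤ FT.heightList cs := height_le_of_mem hmem
        show (i :: σ).length + FT.height s ≤ FT.heightList cs + 1
        simp only [List.length_cons]
        omega

end Aux
namespace Aux

variable {QA : Type} {n : ℕ}

lemma add_inf_left {a : OSR} (h : a ≠ OSR.bot) : OSR.inf.add a = OSR.inf := by
  revert h; cases a <;> decide

lemma add_inf_right {a : OSR} (h : a ≠ OSR.bot) : a.add OSR.inf = OSR.inf := by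
  revert h; cases a <;> decide

section
variable {Sigma : Type} [DecidableEq QA] {A : MPA Sigma QA} {B : MPA Sigma (Fin n)}

lemma wrap_right {inner P e : Elem QA n} {g g' : Option (Elem QA n)}
    (hg' : InPathsOpt A B g') (hg'q : ∀ b, g' = some b → e.q = b.p)
    (heq : inner = extWrap g e g') (hP : InPathsO A B (some P)) (hq : inner.q = P.p) :
    ∃ g₂', InPathsOpt A B g₂' ∧ (∀ b, g₂' = some b → e.q = b.p) ∧
      eprod inner P = extWrap g e g₂' := by
  cases g' with
  | none =>
    refine ⟨some P, hP, ?_, ?_⟩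
    · intro b hb
      injection hb with hb
      subst hb
      cases g with
      | none => rw [heq] at hq; exact hq
      | some a => rw [heq] at hq; exact hq
    · cases g with
      | none => rw [heq]; rfl
      | some a => rw [heq]; exact eprod_assoc a e P
  | some b0 =>
    have hb0q : b0.q = P.p := by
      cases g with
      | none => rw [heq] at hq; exact hq
      | some a => rw [heq] at hq; exact hq
    refine ⟨some (eprod b0 P), inPaths_mul hg' hP hb0q, ?_, ?_⟩
    · intro b hb
      injection hb with hb
      subst hb
      exact hg'q b0 rfl
    · cases g with
      | none => rw [heq]; exact eprod_assoc e b0 P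
      | some a => rw [heq]; simp only [extWrap]; rw [eprod_assoc, eprod_assoc]

lemma wrap_left {inner P e : Elem QA n} {g g' : Option (Elem QA n)}
    (hg : InPathsOpt A B g) (hgq : ∀ a, g = some a → a.q = e.p)
    (heq : inner = extWrap g e g') (hP : InPathsO A B (some P)) (hq : P.q = inner.p) :
    ∃ g₂, InPathsOpt A B g₂ ∧ (∀ a, g₂ = some a → a.q = e.p) ∧
      eprod P inner = extWrap g₂ e g' := by
  cases g with
  | none =>
    refine ⟨some P, hP, ?_, ?_⟩
    · intro a ha
      injection ha with ha
      subst ha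
      cases g' with
      | none => rw [heq] at hq; exact hq
      | some b => rw [heq] at hq; exact hq
    · cases g' with
      | none => rw [heq]; rfl
      | some b => rw [heq]; rfl
  | some a0 =>
    have ha0q : P.q = a0.p := by
      cases g' with
      | none => rw [heq] at hq; exact hq
      | some b => rw [heq] at hq; exact hq
    refine ⟨some (eprod P a0), inPaths_mul hP hg ha0q, ?_, ?_⟩
    · intro a ha
      injection ha with ha
      subst ha
      exact hgq a0 rfl
    · cases g' with
      | none => rw [heq]; simp only [extWrap]; rw [← eprod_assoc]
      | some b => rw [heq]; simp only [extWrap]; rw [← eprod_assoc]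

end

end Aux
namespace Aux

variable {QA : Type} {n : ℕ}

lemma contribStep2_left {d₁ d₂ : FT QA n} {cs : List (FT QA n)} (hcs : cs = [d₁, d₂])
    {C : Set (Fin n × Fin n)} {a ℓ : Fin n} (b : Fin n) (hab : (a, b) ∈ C)
    (hP : (FT.label d₂).M ℓ b ≠ OSR.bot) (hM : (FT.label d₁).M a ℓ ≠ OSR.bot) :
    (a, ℓ) ∈ contribStep cs C 0 := by
  subst hcs
  exact ⟨b, hab, hP, hM⟩

lemma contribStep2_right {d₁ d₂ : FT QA n} {cs : List (FT QA n)} (hcs : cs = [d₁, d₂])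
    {C : Set (Fin n × Fin n)} {ℓ b : Fin n} (a : Fin n) (hab : (a, b) ∈ C)
    (hM : (FT.label d₁).M a ℓ ≠ OSR.bot) (hP : (FT.label d₂).M ℓ b ≠ OSR.bot) :
    (ℓ, b) ∈ contribStep cs C 1 := by
  subst hcs
  exact ⟨a, hab, hM, hP⟩

lemma contribStepN_left {d₁ d₂ d₃ : FT QA n} {ds cs : List (FT QA n)}
    (hcs : cs = d₁ :: d₂ :: d₃ :: ds) {C : Set (Fin n × Fin n)} {a ℓ : Fin n} (b : Fin n)
    (hab : (a, b) ∈ C) (h2 : (FT.label d₁).M ℓ b ≠ OSR.bot)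
    (h3 : (FT.label d₁).M a ℓ ≠ OSR.bot) :
    (a, ℓ) ∈ contribStep cs C 0 := by
  subst hcs
  exact ⟨b, hab, h2, h3⟩

lemma contribStepN_right {d₁ d₂ d₃ : FT QA n} {ds cs : List (FT QA n)}
    (hcs : cs = d₁ :: d₂ :: d₃ :: ds) {C : Set (Fin n × Fin n)} {i : ℕ} (h0 : ¬ i = 0)
    (hl : i = cs.length - 1) {ℓ b : Fin n} (a : Fin n)
    (hab : (a, b) ∈ C) (h2 : (FT.label d₁).M a ℓ ≠ OSR.bot)
    (h3 : (FT.label d₁).M ℓ b ≠ OSR.bot) :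
    (ℓ, b) ∈ contribStep cs C i := by
  subst hcs
  show (ℓ, b) ∈ contribStep _ C i
  simp only [contribStep]
  rw [if_neg h0, if_pos hl]
  exact ⟨a, hab, h2, h3⟩

lemma contribStepN_mid {d₁ d₂ d₃ : FT QA n} {ds cs : List (FT QA n)}
    (hcs : cs = d₁ :: d₂ :: d₃ :: ds) {C : Set (Fin n × Fin n)} {i : ℕ} (h0 : ¬ i = 0)
    (hl : ¬ i = cs.length - 1) {ℓ k : Fin n} (a b : Fin n) (hab : (a, b) ∈ C)
    (h1 : (FT.label d₁).M a ℓ ≠ OSR.bot) (h2 : (FT.label d₁).M k b ≠ OSR.bot)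
    (h3 : (FT.label d₁).M ℓ k ≠ OSR.bot) (h4 : (FT.label d₁).M k ℓ ≠ OSR.bot) :
    (ℓ, k) ∈ contribStep cs C i := by
  subst hcs
  show (ℓ, k) ∈ contribStep _ C i
  simp only [contribStep]
  rw [if_neg h0, if_neg hl]
  exact ⟨a, b, hab, h1, h2, h3, h4⟩

lemma beta_node_base {lbl : Elem QA n} {cs : List (FT QA n)} {i : ℕ} {c : FT QA n}
    (hc : cs[i]? = some c) : beta (FT.node lbl cs) [i] = estab (FT.label c) := by
  delta beta
  conv_lhs => whnf
  rw [hc]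

lemma beta_node_cons {lbl : Elem QA n} {cs : List (FT QA n)} {i : ℕ} {c : FT QA n}
    (hc : cs[i]? = some c) (j : ℕ) (rest' : List ℕ) :
    beta (FT.node lbl cs) (i :: j :: rest') =
      (if cs.length = 2 then
        (if i = 0 then eprod (beta c (j :: rest')) ((cs[1]?.map FT.label).getD lbl)
         else eprod ((cs[0]?.map FT.label).getD lbl) (beta c (j :: rest')))
       else if i = 0 then eprod (beta c (j :: rest')) (FT.label c)
       else if i = cs.length - 1 then eprod (FT.label c) (beta c (j :: rest'))
       else eflat (beta c (j :: rest'))) := by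
  delta beta
  conv_lhs => whnf
  rw [hc]

lemma contribAt_nil (t : FT QA n) (C : Set (Fin n × Fin n)) : contribAt t C [] = C := by
  cases t <;> rfl

lemma contribAt_node {lbl : Elem QA n} {cs : List (FT QA n)} {i : ℕ} {c : FT QA n}
    (hc : cs[i]? = some c) (C : Set (Fin n × Fin n)) (rest : List ℕ) :
    contribAt (FT.node lbl cs) C (i :: rest) = contribAt c (contribStep cs C i) rest := by
  delta contribAt
  conv_lhs => whnf
  rw [hc]

section
variable {Sigma : Type} [DecidableEq QA] {A : MPA Sigma QA} {B : MPA Sigma (Fin n)}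

lemma beta_main : ∀ (π : List ℕ) (t : FT QA n) (C : Set (Fin n × Fin n)),
    FT.WF t → (∀ e ∈ FT.leaves t, IsGen A B e) →
    (∃ σ i₀, π = σ ++ [i₀] ∧ ∃ lbl₁ cs₁, FT.subtreeAt t σ = some (FT.node lbl₁ cs₁) ∧
      3 ≤ cs₁.length ∧ 0 < i₀ ∧ i₀ < cs₁.length - 1 ∧
      ∃ c₁, cs₁[i₀]? = some c₁ ∧ (FT.label c₁).x = OSR.one ∧
        ∀ ij ∈ contribAt t C π, (FT.label c₁).M ij.1 ij.2 = OSR.zero) →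
    InAsympO A B (some (beta t π)) ∧ ebar (beta t π) = ebar (FT.label t) ∧
    (beta t π).x = OSR.inf ∧
    (∀ a b : Fin n, (a, b) ∈ C → (beta t π).M a b ≠ OSR.inf) ∧
    ∃ (m : ℕ) (e : Elem QA n) (g g' : Option (Elem QA n)),
      m + 1 ≤ π.length ∧ TractCore A B m e ∧ InPathsOpt A B g ∧ InPathsOpt A B g' ∧
      (∀ a, g = some a → a.q = e.p) ∧ (∀ b, g' = some b → e.q = b.p) ∧
      beta t π = extWrap g e g' := by
  intro π
  induction π with
  | nil =>
    intro t C _ _ hf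
    obtain ⟨σ, i₀, hσ, _⟩ := hf
    exact absurd hσ (by simp)
  | cons i rest ih =>
    intro t C hwf hgen hf
    obtain ⟨σ, i₀, hσ, lbl₁, cs₁, hsub, hlen3, hipos, hilt, c₁, hc₁, hcx, hczero⟩ := hf
    cases t with
    | leaf e =>
      exfalso
      cases σ with
      | nil =>
        rw [FT.subtreeAt] at hsub
        simp at hsub
      | cons s σ' =>
        rw [FT.subtreeAt] at hsub
        simp [FT.childAt] at hsub
    | node lbl cs =>
      cases hwf with
      | node _ _ hlen hwfc hchain hfold hidem =>
      have hgensub : ∀ c ∈ cs, ∀ e ∈ FT.leaves c, IsGen A B e :=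
        fun c hc e he => hgen e (mem_leavesList_of_mem hc he)
      have hgoodlbl := label_good (FT.WF.node lbl cs hlen hwfc hchain hfold hidem) hgen
      cases rest with
      | nil =>
        -- base case: π = [i], the parent of the fault
        have hσ0 : σ = [] ∧ i₀ = i := by
          cases σ with
          | nil =>
            injection hσ with h1 _
            exact ⟨rfl, h1.symm⟩
          | cons s σ' =>
            injection hσ with h1 h2
            exact absurd h2.symm (by simp)
        obtain ⟨rfl, rfl⟩ := hσ0
        rw [FT.subtreeAt] at hsub
        injection hsub with hsub
        injection hsub with hbl hcs
        subst hbl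
        subst hcs
        obtain ⟨hpq, hprod, hall⟩ := hidem hlen3
        have hmemc := List.mem_of_getElem? hc₁
        have hlabc : FT.label c₁ = lbl := hall c₁ hmemc
        have hgoodc := label_good (hwfc c₁ hmemc) (hgensub c₁ hmemc)
        have hMM : omul lbl.M lbl.M = lbl.M := congrArg Elem.M hprod
        have hpi : pathIdem (FT.label c₁) := by
          rw [hlabc]
          exact ⟨hpq, by rw [← obar_omul, hMM]⟩
        have hcat : contribAt (FT.node lbl cs) C [i₀] = contribStep cs C i₀ := by
          rw [contribAt_node hc₁, contribAt_nil]
        rw [hcat] at hczero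
        rw [beta_node_base hc₁]
        have hfixc : obar (FT.label c₁).M = (FT.label c₁).M := hgoodc.2.2.1
        refine ⟨InAsympO.stab _ (inAsymp_of_inPaths hgoodc.1) hpi, ?_, ?_, ?_, ?_⟩
        · show ebar (estab (FT.label c₁)) = ebar (FT.label (FT.node lbl cs))
          have hl : FT.label (FT.node lbl cs) = lbl := rfl
          rw [hl, ← hlabc]
          exact ebar_estab (by rw [hlabc]; exact hpq) hcx (by rw [hlabc]; exact hMM)
        · show (FT.label c₁).x.sharp = OSR.inf
          rw [hcx]
          rfl
        · intro a b hab hinf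
          obtain ⟨k, hk1, hk2, hk3⟩ := mstab_entry_inf hfixc hinf
          obtain ⟨d₁, d₂, d₃, ds, rfl⟩ : ∃ d₁ d₂ d₃ ds, cs = d₁ :: d₂ :: d₃ :: ds := by
            cases cs with
            | nil => simp at hlen3
            | cons x l =>
              cases l with
              | nil => simp at hlen3
              | cons y l' =>
                cases l' with
                | nil => simp at hlen3
                | cons z l'' => exact ⟨x, y, z, l'', rfl⟩
          have hd₁ : FT.label d₁ = lbl := hall d₁ (by simp)
          have hrw : (FT.label d₁).M = (FT.label c₁).M := by rw [hd₁, ← hlabc]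
          have hmem : (k, k) ∈ contribStep (d₁ :: d₂ :: d₃ :: ds) C i₀ :=
            contribStepN_mid rfl (by omega) (by omega) a b hab
              (by rw [hrw]; exact hk1) (by rw [hrw]; exact hk3)
              (by rw [hrw, hk2]; decide) (by rw [hrw, hk2]; decide)
          have := hczero (k, k) hmem
          rw [this] at hk2
          exact absurd hk2 (by decide)
        · refine ⟨0, estab (FT.label c₁), none, none, by simp, TractCore.base _ hgoodc.1 hpi,
            trivial, trivial, ?_, ?_, rfl⟩
          · intro a ha
            cases ha
          · intro b hb
            cases hb
      | cons jj rest' =>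
        -- step case
        have hσs : ∃ σ'', σ = i :: σ'' ∧ jj :: rest' = σ'' ++ [i₀] := by
          cases σ with
          | nil =>
            injection hσ with h1 h2
            exact absurd h2 (by simp)
          | cons s σ'' =>
            injection hσ with h1 h2
            exact ⟨σ'', by rw [h1], h2⟩
        obtain ⟨σ'', rfl, hrest⟩ := hσs
        rw [FT.subtreeAt] at hsub
        cases hc : FT.childAt (FT.node lbl cs) i with
        | none => rw [hc] at hsub; cases hsub
        | some c =>
        rw [hc] at hsub
        have hcg : cs[i]? = some c := hc
        have hmemc : c ∈ cs := List.mem_of_getElem? hcg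
        have hcat : contribAt (FT.node lbl cs) C (i :: jj :: rest') =
            contribAt c (contribStep cs C i) (jj :: rest') := contribAt_node hcg C _
        rw [hcat] at hczero
        obtain ⟨ih1, ih2, ih3, ih4, m, e0, g, g', hm, htc, hg, hg', hgq, hg'q, heq⟩ :=
          ih c (contribStep cs C i) (hwfc c hmemc) (hgensub c hmemc)
            ⟨σ'', i₀, hrest, lbl₁, cs₁, hsub, hlen3, hipos, hilt, c₁, hc₁, hcx, hczero⟩
        set inner := beta c (jj :: rest') with hinner
        have hqin : inner.q = (FT.label c).q := by
          have h9 := congrArg Elem.q ih2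
          exact h9
        have hpin : inner.p = (FT.label c).p := by
          have h9 := congrArg Elem.p ih2
          exact h9
        have hMin : obar inner.M = obar (FT.label c).M := by
          have h9 := congrArg Elem.M ih2
          exact h9
        by_cases hlen2 : cs.length = 2
        · -- binary node
          obtain ⟨d₁, d₂, rfl⟩ : ∃ d₁ d₂, cs = [d₁, d₂] := by
            cases cs with
            | nil => simp at hlen2
            | cons x l =>
              cases l with
              | nil => simp at hlen2
              | cons y l' =>
                cases l' with
                | nil => exact ⟨x, y, rfl⟩
                | cons z l'' => exfalso; simp at hlen2
          have hfold2 : lbl = eprod (FT.label d₁) (FT.label d₂) := by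
            have := hfold (FT.label d₁) [FT.label d₂] (by simp)
            simpa using this
          have hch : (FT.label d₁).q = (FT.label d₂).p := by
            rw [List.map_cons, List.map_cons, List.map_nil] at hchain
            exact (List.isChain_cons_cons.mp hchain).1
          have good₁ := label_good (hwfc d₁ (by simp)) (hgensub d₁ (by simp))
          have good₂ := label_good (hwfc d₂ (by simp)) (hgensub d₂ (by simp))
          have hi2 : i < 2 := by
            by_contra hcon
            push_neg at hcon
            rw [List.getElem?_eq_none (by simpa using hcon)] at hcg
            cases hcg
          have hlblnode : FT.label (FT.node lbl [d₁, d₂]) = lbl := rfl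
          by_cases hi0 : i = 0
          · subst hi0
            have hcd : c = d₁ := by
              rw [show ([d₁, d₂])[0]? = some d₁ from rfl] at hcg
              injection hcg with hcg
              exact hcg.symm
            subst hcd
            have hbeta : beta (FT.node lbl [c, d₂]) (0 :: jj :: rest') =
                eprod inner (FT.label d₂) := by
              rw [beta_node_cons hcg]
              simp [hinner]
            rw [hbeta]
            have hqP : inner.q = (FT.label d₂).p := by rw [hqin]; exact hch
            refine ⟨inAsymp_mul ih1 (inAsymp_of_inPaths good₂.1) hqP, ?_, ?_, ?_, ?_⟩
            · rw [ebar_eprod, ih2, hlblnode, hfold2, ebar_eprod]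
            · show inner.x.add (FT.label d₂).x = OSR.inf
              rw [ih3]
              exact add_inf_left good₂.2.1
            · intro a b hab hinf
              obtain ⟨ℓ, hℓ⟩ := omul_entry_inf hinf
              rw [add_eq_inf_iff] at hℓ
              obtain ⟨hn1, hn2, hor⟩ := hℓ
              have hMinf : inner.M a ℓ = OSR.inf := by
                rcases hor with h | h
                · exact h
                · exact absurd h (bar_fix_entry_ne_inf good₂.2.2.1 ℓ b)
              have hd1ne : (FT.label c).M a ℓ ≠ OSR.bot := by
                have h5 : (inner.M a ℓ).bar = ((FT.label c).M a ℓ).bar :=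
                  congrFun (congrFun hMin a) ℓ
                rw [hMinf] at h5
                exact ne_bot_of_bar_eq_one h5.symm
              exact ih4 a ℓ (contribStep2_left rfl b hab hn2 hd1ne) hMinf
            · obtain ⟨g₂', hP1, hP2, hP3⟩ := wrap_right hg' hg'q heq good₂.1 hqP
              exact ⟨m, e0, g, g₂', by simp only [List.length_cons] at hm ⊢; omega,
                htc, hg, hP1, hgq, hP2, hP3⟩
          · have hi1 : i = 1 := by omega
            subst hi1
            have hcd : c = d₂ := by
              rw [show ([d₁, d₂])[1]? = some d₂ from rfl] at hcg
              injection hcg with hcg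
              exact hcg.symm
            subst hcd
            have hbeta : beta (FT.node lbl [d₁, c]) (1 :: jj :: rest') =
                eprod (FT.label d₁) inner := by
              rw [beta_node_cons hcg]
              simp [hinner]
            rw [hbeta]
            have hqP : (FT.label d₁).q = inner.p := by rw [hpin]; exact hch
            refine ⟨inAsymp_mul (inAsymp_of_inPaths good₁.1) ih1 hqP, ?_, ?_, ?_, ?_⟩
            · rw [ebar_eprod, ih2, hlblnode, hfold2, ebar_eprod]
            · show (FT.label d₁).x.add inner.x = OSR.inf
              rw [ih3]
              exact add_inf_right good₁.2.1
            · intro a b hab hinf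
              obtain ⟨ℓ, hℓ⟩ := omul_entry_inf hinf
              rw [add_eq_inf_iff] at hℓ
              obtain ⟨hn1, hn2, hor⟩ := hℓ
              have hMinf : inner.M ℓ b = OSR.inf := by
                rcases hor with h | h
                · exact absurd h (bar_fix_entry_ne_inf good₁.2.2.1 a ℓ)
                · exact h
              have hd2ne : (FT.label c).M ℓ b ≠ OSR.bot := by
                have h5 : (inner.M ℓ b).bar = ((FT.label c).M ℓ b).bar :=
                  congrFun (congrFun hMin ℓ) b
                rw [hMinf] at h5
                exact ne_bot_of_bar_eq_one h5.symm
              exact ih4 ℓ b (contribStep2_right rfl a hab hn1 hd2ne) hMinf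
            · obtain ⟨g₂, hP1, hP2, hP3⟩ := wrap_left hg hgq heq good₁.1 hqP
              exact ⟨m, e0, g₂, g', by simp only [List.length_cons] at hm ⊢; omega,
                htc, hP1, hg', hP2, hg'q, hP3⟩
        · -- idempotent node with ≥ 3 children
          have hlen3' : 3 ≤ cs.length := by omega
          obtain ⟨hpq, hprod, hall⟩ := hidem hlen3'
          have hMM : omul lbl.M lbl.M = lbl.M := congrArg Elem.M hprod
          have hfixlbl : obar lbl.M = lbl.M := hgoodlbl.2.2.1
          have hlabc : FT.label c = lbl := hall c hmemc
          have hDidem : omul (obar lbl.M) (obar lbl.M) = obar lbl.M := by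
            rw [← obar_omul, hMM]
          obtain ⟨d₁, d₂, d₃, ds, rfl⟩ : ∃ d₁ d₂ d₃ ds, cs = d₁ :: d₂ :: d₃ :: ds := by
            cases cs with
            | nil => simp at hlen3'
            | cons x l =>
              cases l with
              | nil => simp at hlen3'
              | cons y l' =>
                cases l' with
                | nil => simp at hlen3'
                | cons z l'' => exact ⟨x, y, z, l'', rfl⟩
          have hd₁ : FT.label d₁ = lbl := hall d₁ (by simp)
          have good_c := label_good (hwfc c hmemc) (hgensub c hmemc)
          have hlblnode : FT.label (FT.node lbl (d₁ :: d₂ :: d₃ :: ds)) = lbl := rfl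
          have hbMeq : obar inner.M = lbl.M := by rw [hMin, hlabc, hfixlbl]
          by_cases hi0 : i = 0
          · subst hi0
            have hbeta : beta (FT.node lbl (d₁ :: d₂ :: d₃ :: ds)) (0 :: jj :: rest') =
                eprod inner (FT.label c) := by
              rw [beta_node_cons hcg]
              rw [if_neg hlen2, if_pos rfl]
            rw [hbeta]
            have hqP : inner.q = (FT.label c).p := by
              rw [hqin, hlabc, ← hpq, ← hlabc]
            refine ⟨inAsymp_mul ih1 (inAsymp_of_inPaths good_c.1) hqP, ?_, ?_, ?_, ?_⟩
            · rw [ebar_eprod, ih2, hlblnode, hlabc, ← ebar_eprod, hprod]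
            · show inner.x.add (FT.label c).x = OSR.inf
              rw [ih3]
              exact add_inf_left good_c.2.1
            · intro a b hab hinf
              obtain ⟨ℓ, hℓ⟩ := omul_entry_inf hinf
              rw [add_eq_inf_iff] at hℓ
              obtain ⟨hn1, hn2, hor⟩ := hℓ
              have hMinf : inner.M a ℓ = OSR.inf := by
                rcases hor with h | h
                · exact h
                · exact absurd h (bar_fix_entry_ne_inf good_c.2.2.1 ℓ b)
              have hd1ne : (FT.label d₁).M a ℓ ≠ OSR.bot := by
                have h5 : (inner.M a ℓ).bar = lbl.M a ℓ := congrFun (congrFun hbMeq a) ℓ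
                rw [hMinf] at h5
                rw [hd₁, ← h5]
                decide
              have hd1ℓb : (FT.label d₁).M ℓ b ≠ OSR.bot := by
                rw [hd₁, ← hlabc]
                exact hn2
              exact ih4 a ℓ (contribStepN_left rfl b hab hd1ℓb hd1ne) hMinf
            · obtain ⟨g₂', hP1, hP2, hP3⟩ := wrap_right hg' hg'q heq good_c.1 hqP
              exact ⟨m, e0, g, g₂', by simp only [List.length_cons] at hm ⊢; omega,
                htc, hg, hP1, hgq, hP2, hP3⟩
          · by_cases hilast : i = (d₁ :: d₂ :: d₃ :: ds).length - 1
            · have hbeta : beta (FT.node lbl (d₁ :: d₂ :: d₃ :: ds)) (i :: jj :: rest') =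
                  eprod (FT.label c) inner := by
                rw [beta_node_cons hcg]
                rw [if_neg hlen2, if_neg hi0, if_pos hilast]
              rw [hbeta]
              have hqP : (FT.label c).q = inner.p := by
                rw [hpin, hlabc, ← hpq]
              refine ⟨inAsymp_mul (inAsymp_of_inPaths good_c.1) ih1 hqP, ?_, ?_, ?_, ?_⟩
              · rw [ebar_eprod, ih2, hlblnode, hlabc, ← ebar_eprod, hprod]
              · show (FT.label c).x.add inner.x = OSR.inf
                rw [ih3]
                exact add_inf_right good_c.2.1
              · intro a b hab hinf
                obtain ⟨ℓ, hℓ⟩ := omul_entry_inf hinf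
                rw [add_eq_inf_iff] at hℓ
                obtain ⟨hn1, hn2, hor⟩ := hℓ
                have hMinf : inner.M ℓ b = OSR.inf := by
                  rcases hor with h | h
                  · exact absurd h (bar_fix_entry_ne_inf good_c.2.2.1 a ℓ)
                  · exact h
                have hd1ne : (FT.label d₁).M ℓ b ≠ OSR.bot := by
                  have h5 : (inner.M ℓ b).bar = lbl.M ℓ b := congrFun (congrFun hbMeq ℓ) b
                  rw [hMinf] at h5
                  rw [hd₁, ← h5]
                  decide
                have hd1aℓ : (FT.label d₁).M a ℓ ≠ OSR.bot := by
                  rw [hd₁, ← hlabc]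
                  exact hn1
                exact ih4 ℓ b (contribStepN_right rfl hi0 hilast a hab hd1aℓ hd1ne) hMinf
              · obtain ⟨g₂, hP1, hP2, hP3⟩ := wrap_left hg hgq heq good_c.1 hqP
                exact ⟨m, e0, g₂, g', by simp only [List.length_cons] at hm ⊢; omega,
                  htc, hP1, hg', hP2, hg'q, hP3⟩
            · -- middle child: flattening
              have hbeta : beta (FT.node lbl (d₁ :: d₂ :: d₃ :: ds)) (i :: jj :: rest') =
                  eflat inner := by
                rw [beta_node_cons hcg]
                rw [if_neg hlen2, if_neg hi0, if_neg hilast]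
              rw [hbeta]
              have hpqin : inner.p = inner.q := by
                rw [hpin, hqin, hlabc]
                exact hpq
              have hbarid : omul (obar inner.M) (obar inner.M) = obar inner.M := by
                rw [hMin, hlabc]
                exact hDidem
              have hpiInner : pathIdem inner := ⟨hpqin, hbarid⟩
              refine ⟨InAsympO.flat inner ih1 hpiInner, ?_, ?_, ?_, ?_⟩
              · rw [ebar_eflat hpqin hbarid, ih2, hlblnode, hlabc]
              · exact ih3
              · intro a b hab hinf
                obtain ⟨k, u, v, hDik, hDkj, hNku, hNuv, hNvk, hcase⟩ := mflat_entry_inf hinf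
                rw [hbMeq] at hDik hDkj
                have toM : ∀ x y : Fin n, inner.M x y ≠ OSR.bot → lbl.M x y ≠ OSR.bot := by
                  intro x y hxy
                  have h5 : (inner.M x y).bar = lbl.M x y := congrFun (congrFun hbMeq x) y
                  rw [← h5]
                  exact (bar_ne_bot_iff _).mpr hxy
                have hMku := toM _ _ hNku
                have hMuv := toM _ _ hNuv
                have hMvk := toM _ _ hNvk
                have T : ∀ {x y z : Fin n}, lbl.M x y ≠ OSR.bot → lbl.M y z ≠ OSR.bot →
                    lbl.M x z ≠ OSR.bot := fun h1 h2 => idem_trans hMM h1 h2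
                have hMuk : lbl.M u k ≠ OSR.bot := T hMuv hMvk
                have hMd : ∀ x y : Fin n, lbl.M x y ≠ OSR.bot → (FT.label d₁).M x y ≠ OSR.bot := by
                  intro x y hxy
                  rw [hd₁]
                  exact hxy
                rcases hcase with h | h | h
                · exact ih4 k u (contribStepN_mid rfl hi0 hilast a b hab
                    (hMd _ _ hDik) (hMd _ _ (T hMuk hDkj)) (hMd _ _ hMku) (hMd _ _ hMuk)) h
                · exact ih4 u v (contribStepN_mid rfl hi0 hilast a b hab
                    (hMd _ _ (T hDik hMku)) (hMd _ _ (T hMvk hDkj)) (hMd _ _ hMuv)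
                    (hMd _ _ (T hMvk hMku))) h
                · exact ih4 v k (contribStepN_mid rfl hi0 hilast a b hab
                    (hMd _ _ (T (T hDik hMku) hMuv)) (hMd _ _ hDkj) (hMd _ _ hMvk)
                    (hMd _ _ (T hMku hMuv))) h
              · have hpiW : pathIdem (extWrap g e0 g') := by
                  rw [← heq]
                  exact hpiInner
                have htc' := TractCore.step m e0 g g' htc hg hg' hgq hg'q hpiW
                rw [← heq] at htc'
                refine ⟨m + 1, eflat inner, none, none,
                  by simp only [List.length_cons] at hm ⊢; omega, htc', trivial, trivial,
                  ?_, ?_, rfl⟩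
                · intro a ha
                  cases ha
                · intro b hb
                  cases hb

end
end Aux
namespace Aux

lemma barW_ne_inf (v : WithBot ℕ) : barW v ≠ OSR.inf := by
  induction v using WithBot.recBotCoe with
  | bot => exact fun h => by cases h
  | coe m =>
    show (if m = 0 then OSR.zero else OSR.one) ≠ OSR.inf
    split <;> decide

end Aux

/-- if some word with `f_A(w) ≠ -∞` admits a factorisation tree of height at
most `3|S̄_{A,B}|` containing a fault, then `I_{A,B}` contains a tractable witness of
non-domination. -/
theorem fault_implies_tractable_witness {Sigma QA : Type} [Fintype Sigma] [Fintype QA]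
    [DecidableEq QA] {nB : ℕ} (A : MPA Sigma QA) (B : MPA Sigma (Fin nB))
    (hdet : A.Deterministic) (hB : ∀ v : List Sigma, B.func v ≠ ⊥)
    (h : ∃ (w : List Sigma) (t : FT QA nB),
        A.func w ≠ ⊥ ∧ IsFactTreeOn A B w t ∧ FT.height t ≤ 3 * sizeS A B ∧
        ∃ π : List ℕ, IsFaultAt B t π) :
    ∃ e : Elem QA nB, InAsympO A B (some e) ∧ IsTractableWitness A B e := by
  obtain ⟨w, t, hfA, hft, hheight, π, hfault⟩ := h
  obtain ⟨hwf, p, q, xs, hIp, hFq, hPL⟩ := hft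
  obtain ⟨hgenls, hheadp, hlastq⟩ := Aux.pathLeaves_props (FT.leaves t) p w xs q hPL
  obtain ⟨σ, i₀, hσ, lbl₁, cs₁, hsub, hlen3, hipos, hilt, c₁, hc₁, hcx, hczero⟩ := hfault
  have hbm := Aux.beta_main (A := A) (B := B) π t (rootContrib B t) hwf hgenls
    ⟨σ, i₀, hσ, lbl₁, cs₁, hsub, hlen3, hipos, hilt, c₁, hc₁, hcx, hczero⟩
  obtain ⟨hAs, hebar, hx, hnoinf, m, e0, g, g', hm, htc, hg, hg', hgq, hg'q, heq⟩ := hbm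
  have good := Aux.label_good (A := A) (B := B) hwf hgenls
  have hpb : (beta t π).p = (FT.label t).p := by
    have h9 := congrArg Elem.p hebar
    exact h9
  have hqb : (beta t π).q = (FT.label t).q := by
    have h9 := congrArg Elem.q hebar
    exact h9
  have hMb : obar (beta t π).M = obar (FT.label t).M := by
    have h9 := congrArg Elem.M hebar
    exact h9
  obtain ⟨e₀, he₀⟩ : ∃ e₀, (FT.leaves t).head? = some e₀ := by
    cases hh : (FT.leaves t).head? with
    | none => exact absurd (List.head?_eq_none_iff.mp hh) good.2.2.2.1
    | some e₀ => exact ⟨e₀, rfl⟩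
  obtain ⟨e₁, he₁⟩ : ∃ e₁, (FT.leaves t).getLast? = some e₁ := by
    cases hh : (FT.leaves t).getLast? with
    | none => exact absurd (List.getLast?_eq_none_iff.mp hh) good.2.2.2.1
    | some e₁ => exact ⟨e₁, rfl⟩
  have hlp : (FT.label t).p = p := by
    rw [good.2.2.2.2.1 e₀ he₀]
    exact hheadp e₀ he₀
  have hlq : (FT.label t).q = q := by
    rw [good.2.2.2.2.2 e₁ he₁]
    exact hlastq e₁ he₁
  refine ⟨beta t π, hAs, ⟨?_, ?_, hx, ?_⟩, m, e0, g, g', ?_, htc, hg, hg', hgq, hg'q, heq⟩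
  · rw [hpb, hlp]
    exact hIp
  · rw [hqb, hlq]
    exact hFq
  · intro hcon
    obtain ⟨i, hi⟩ := (Aux.osum_eq_inf_iff _).mp hcon
    obtain ⟨j, hj⟩ := (Aux.osum_eq_inf_iff _).mp hi
    rw [Aux.add_eq_inf_iff] at hj
    obtain ⟨hj1, hj2, hj3⟩ := hj
    have hinner : ((beta t π).M i j).add (barW (B.F j)) = OSR.inf := by
      rcases hj3 with h | h
      · exact absurd h (Aux.barW_ne_inf _)
      · exact h
    rw [Aux.add_eq_inf_iff] at hinner
    obtain ⟨hk1, hk2, hk3⟩ := hinner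
    have hMinf : (beta t π).M i j = OSR.inf := by
      rcases hk3 with h | h
      · exact h
      · exact absurd h (Aux.barW_ne_inf _)
    have hlblne : (FT.label t).M i j ≠ OSR.bot := by
      have h5 : ((beta t π).M i j).bar = ((FT.label t).M i j).bar :=
        congrFun (congrFun hMb i) j
      rw [hMinf] at h5
      exact Aux.ne_bot_of_bar_eq_one h5.symm
    have hmem : (i, j) ∈ rootContrib B t :=
      ⟨(Aux.barW_ne_bot_iff _).mp hj1, (Aux.barW_ne_bot_iff _).mp hk2, hlblne⟩
    exact hnoinf i j hmem hMinf
  · have hsh := Aux.subtreeAt_height σ t _ hsub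
    have h1 : 1 ≤ FT.height (FT.node lbl₁ cs₁) := by
      show 1 ≤ FT.heightList cs₁ + 1
      omega
    have hπ : π.length = σ.length + 1 := by
      rw [hσ]
      simp
    omega
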